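/- Wang–Ma's terminating expansion formula (the y = q^N case of equation (wang-ma1)): for a nonnegative integer N, complex parameters q, a, b, an arbitrary sequence (β_j), and any function K defined on powers of q, provided no denominator vanishes, K(q^N) · Σ_{j=0}^{N} [(1 - b q^{2j}) (q^{-N}; q)_j / ((1-b)(b q^{N+1}; q)_j)] q^{Nj} β_j = Σ_{k=0}^{N} [(1 - a q^{2k}) (q^{-N}; q)_k / ((1-a)(q; q)_k (a q^{N+1}; q)_k)] q^{Nk} (a; q)_k / 1 · Σ_{j=0}^{k} [(q^{-k}; q)_j (a q^k; q)_j (bq; q)_j / (b; q)_{2j}] (-1)^j q^{j(j+1)/2} β_j · Σ_{m=0}^{k-j} [(q^{-k+j}; q)_m (a q^{j+k}; q)_m (b q^{j+1}; q)_m / ((q; q)_m (b q^{1+2j}; q)_m (aq; q)_{j+m})] q^m K(q^{j+m}). -/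

import Mathlib

open Finset

set_option maxHeartbeats 2000000

/-- The finite q-shifted factorial `(a; q)_n`. -/
noncomputable def qp (q a : ℂ) (n : ℕ) : ℂ := ∏ i ∈ Finset.range n, (1 - a * q ^ i)


lemma qp_zero (q x : ℂ) : qp q x 0 = 1 := by simp [qp]

lemma qp_succ (q x : ℂ) (n : ℕ) : qp q x (n+1) = qp q x n * (1 - x * q ^ n) :=
  Finset.prod_range_succ _ _

lemma qp_add (q x : ℂ) (m n : ℕ) : qp q x (m+n) = qp q x m * qp q (x * q ^ m) n := by
  unfold qp
  rw [Finset.prod_range_add]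
  congr 1
  refine Finset.prod_congr rfl fun i _ => ?_
  rw [pow_add]; ring

lemma qp_shift (q x : ℂ) (n : ℕ) : qp q x (n+1) = (1 - x) * qp q (x * q) n := by
  rw [show n + 1 = 1 + n by omega, qp_add]
  simp [qp]

lemma qp_eq_zero (q x : ℂ) {k n : ℕ} (h : k < n) (hx : x * q ^ k = 1) : qp q x n = 0 :=
  Finset.prod_eq_zero (mem_range.2 h) (by rw [hx]; ring)

lemma inv_pow_mul {q : ℂ} (hq0 : q ≠ 0) (i n : ℕ) : (q ^ (i+n))⁻¹ * q ^ i = (q ^ n)⁻¹ := by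
  rw [pow_add]
  field_simp

lemma two_tri (n : ℕ) : 2 * (n*(n+1)/2) = n*(n+1) :=
  Nat.two_mul_div_two_of_even (by simpa [Nat.even_mul] using Nat.even_mul_succ_self n)

lemma tri_succ (i : ℕ) : (i+1)*(i+2)/2 = i*(i+1)/2 + (i+1) := by
  have h : (i+1)*(i+2) = i*(i+1) + (i+1)*2 := by ring
  rw [h, Nat.add_mul_div_right _ _ (by norm_num : 0 < 2)]

lemma tri_add (j m : ℕ) : (j+m)*((j+m)+1)/2 = j*(j+1)/2 + m*(m+1)/2 + j*m := by
  have h1 := two_tri j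
  have h2 := two_tri m
  have h3 := two_tri (j+m)
  have h4 : (j+m)*((j+m)+1) = j*(j+1) + m*(m+1) + 2*(j*m) := by ring
  omega

lemma qp_inv_pow {q : ℂ} (hq0 : q ≠ 0) :
    ∀ i s : ℕ, qp q ((q ^ (i+s))⁻¹) i * qp q q s * (-1 : ℂ)^i * q^(i*s + i*(i+1)/2)
      = qp q q (i+s) := by
  intro i
  induction i with
  | zero => intro s; simp [qp_zero]
  | succ i ih =>
    intro s
    have e1 : i + 1 + s = i + (s+1) := by omega
    have e2 : (i+1)*s + (i+1)*(i+2)/2 = (i*(s+1) + i*(i+1)/2) + (s+1) := by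
      rw [tri_succ]
      have h1 : (i+1)*s = i*s + s := by ring
      have h2 : i*(s+1) = i*s + i := by ring
      omega
    have hx : ((q:ℂ) ^ (i+(s+1)))⁻¹ * (q ^ i * q ^ (s+1)) = 1 := by
      rw [← pow_add]
      field_simp
    rw [e1, e2, qp_succ, pow_succ (-1:ℂ), ← ih (s+1), qp_succ q q s]
    linear_combination qp q ((q^(i+(s+1)))⁻¹) i * qp q q s * (-1:ℂ)^i *
      q^(i*(s+1)+i*(i+1)/2) * hx

lemma arg_eq2 (q x : ℂ) {e f g h : ℕ} (hef : e + f = g + h) :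
    x * q ^ e * q ^ f = x * q ^ g * q ^ h := by
  rw [mul_assoc, mul_assoc, ← pow_add, ← pow_add, hef]

lemma neg_one_sq' (j : ℕ) : (-1:ℂ)^j * (-1:ℂ)^j = 1 := by
  rw [← pow_add]; exact Even.neg_one_pow ⟨j, rfl⟩


lemma qp_inv_prod {q : ℂ} (hq0 : q ≠ 0) (n s : ℕ) :
    qp q ((q ^ n)⁻¹) s * q ^ (n*s) = ∏ t ∈ range s, (q ^ n - q ^ t) := by
  have hqn : (q:ℂ)^n ≠ 0 := pow_ne_zero _ hq0
  rw [pow_mul, ← Finset.card_range s, ← Finset.prod_const, Finset.card_range, qp,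
    ← Finset.prod_mul_distrib]
  refine Finset.prod_congr rfl fun t _ => ?_
  have h := inv_mul_cancel₀ hqn
  linear_combination -q^t * h

lemma delta (q A : ℂ) (n : ℕ) (hq0 : q ≠ 0) (hqn : n ≠ 0 → q ^ n ≠ 1)
    (hd1 : ∀ s, qp q q s ≠ 0) (hd2 : ∀ s, qp q (A * q ^ (n+1)) s ≠ 0) :
    ∑ s ∈ range (n+1),
      (1 - A * q ^ (2*s)) * qp q A s * qp q ((q ^ n)⁻¹) s * q ^ (n*s)
        / (qp q q s * qp q (A * q ^ (n+1)) s)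
    = if n = 0 then 1 - A else 0 := by
  have hW : ∀ s, (1 - A * q ^ (2*s)) * qp q A s * qp q ((q ^ n)⁻¹) s * q ^ (n*s)
      = (1 - A * q ^ (2*s)) * qp q A s * ∏ t ∈ range s, (q ^ n - q ^ t) := by
    intro s
    rw [mul_assoc ((1 - A * q ^ (2*s)) * qp q A s), qp_inv_prod hq0]
  simp only [hW]
  rcases Nat.eq_zero_or_pos n with h0 | hpos
  · subst h0; simp [qp_zero]
  have hn0 : n ≠ 0 := by omega
  have hv1 : (q:ℂ)^n - 1 ≠ 0 := by
    intro h; apply hqn hn0; linear_combination h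
  have key : ∀ m : ℕ, ∑ s ∈ range (m+1),
      (1 - A * q ^ (2*s)) * qp q A s * (∏ t ∈ range s, (q ^ n - q ^ t))
        / (qp q q s * qp q (A * q ^ (n+1)) s)
    = (1 - A) * qp q (A*q) m * (∏ t ∈ range m, (q ^ n - q ^ t)) * (q ^ n - q ^ m)
        / (qp q q m * qp q (A * q ^ (n+1)) m * (q ^ n - 1)) := by
    intro m
    induction m with
    | zero =>
      simp [qp_zero]
      rw [mul_div_assoc, div_self hv1, mul_one]
    | succ m ih =>
      rw [Finset.sum_range_succ, ih]
      have h5 : (1:ℂ) - q * q^m ≠ 0 := by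
        have h := hd1 (m+1); rw [qp_succ] at h; exact (mul_ne_zero_iff.mp h).2
      have h6 : (1:ℂ) - A*q^(n+1)*q^m ≠ 0 := by
        have h := hd2 (m+1); rw [qp_succ] at h; exact (mul_ne_zero_iff.mp h).2
      have hQ := hd1 m
      have hS := hd2 m
      rw [qp_succ q q m, qp_succ q (A*q^(n+1)) m, qp_succ q (A*q) m, qp_shift q A m,
        Finset.prod_range_succ]
      generalize qp q (A*q) m = P
      generalize (∏ t ∈ range m, ((q:ℂ) ^ n - q ^ t)) = W
      generalize qp q q m = Q at hQ ⊢
      generalize qp q (A*q^(n+1)) m = S at hS ⊢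
      rw [div_add_div _ _ (by apply_rules [mul_ne_zero]) (by apply_rules [mul_ne_zero]),
        div_eq_div_iff (by apply_rules [mul_ne_zero]) (by apply_rules [mul_ne_zero])]
      ring
  rw [key n]
  simp [hn0]



lemma term_eq (q a b βj Ki : ℂ) (hq0 : q ≠ 0) (h1 : (1:ℂ) - a ≠ 0) (j m n s : ℕ)
    (hqk : qp q q (j+m+s) ≠ 0) (hqm : qp q q m ≠ 0) (hqs : qp q q s ≠ 0)
    (hqms : qp q q (m+s) ≠ 0)
    (hb1 : qp q b (2*j) ≠ 0) (hb2 : qp q (b*q^(1+2*j)) m ≠ 0)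
    (ha1 : qp q (a*q) (j+m) ≠ 0)
    (h4a : qp q (a*q^(j+m+n+1)) (j+m) ≠ 0)
    (h4b : qp q (a*q^(2*(j+m))*q^(n+1)) s ≠ 0) :
    ((1 - a*q^(2*(j+m+s))) * qp q ((q^(j+m+n))⁻¹) (j+m+s) * qp q a (j+m+s)
        / ((1-a) * qp q q (j+m+s) * qp q (a*q^(j+m+n+1)) (j+m+s))) * q^((j+m+n)*(j+m+s)) *
    ((qp q ((q^(j+m+s))⁻¹) j * qp q (a*q^(j+m+s)) j * qp q (b*q) j / qp q b (2*j)) *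
      (-1:ℂ)^j * q^(j*(j+1)/2) * βj *
    ((qp q (q^j*(q^(j+m+s))⁻¹) m * qp q (a*q^(j+(j+m+s))) m * qp q (b*q^(j+1)) m
        / (qp q q m * qp q (b*q^(1+2*j)) m * qp q (a*q) (j+m))) * q^m * Ki))
    = (qp q ((q^(j+m+n))⁻¹) (j+m) * qp q a (2*(j+m)) * qp q (b*q) j * qp q (b*q^(j+1)) m
        * (-1:ℂ)^j * (-1:ℂ)^j * (-1:ℂ)^m * q^((j+m+n)*(j+m) + m) * βj * Ki
      / ((1-a) * qp q (a*q^(j+m+n+1)) (j+m) * qp q b (2*j) * qp q (b*q^(1+2*j)) m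
        * qp q (a*q) (j+m) * qp q q m * q^(j*m + m*(m+1)/2)))
    * ((1 - (a*q^(2*(j+m))) * q^(2*s)) * qp q (a*q^(2*(j+m))) s * qp q ((q^n)⁻¹) s * q^(n*s)
        / (qp q q s * qp q (a*q^(2*(j+m)) * q^(n+1)) s)) := by
  -- normalize the inverse-power argument in the C part
  have e1 : q^j * ((q:ℂ)^(j+m+s))⁻¹ = (q^(m+s))⁻¹ := by
    have h := inv_pow_mul hq0 j (m+s)
    rw [show j+(m+s) = j+m+s from by omega] at h
    rw [mul_comm]; exact h
  rw [e1]
  -- normalize the a-argument in the C part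
  have e2 : a*q^(j+(j+m+s)) = a*q^(j+m+s)*q^j := by
    rw [mul_assoc, ← pow_add, Nat.add_comm j (j+m+s)]
  rw [e2]
  -- a-chain product identity
  have hASP : qp q a (j+m+s) * qp q (a*q^(j+m+s)) j * qp q (a*q^(j+m+s)*q^j) m
      = qp q a (2*(j+m)) * qp q (a*q^(2*(j+m))) s := by
    rw [← qp_add, show a * q ^ (j + m + s) * q ^ j = a * q^((j+m+s)+j) from by
        rw [mul_assoc, ← pow_add], ← qp_add, ← qp_add,
      show j+m+s+j+m = 2*(j+m)+s from by omega]
  by_cases hZ : qp q a (2*(j+m)) * qp q (a*q^(2*(j+m))) s = 0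
  · -- both sides vanish
    have hL : qp q a (j+m+s) * qp q (a*q^(j+m+s)) j * qp q (a*q^(j+m+s)*q^j) m = 0 := by
      rw [hASP]; exact hZ
    rcases mul_eq_zero.mp hL with hL' | h0
    · rcases mul_eq_zero.mp hL' with h0 | h0
      · rw [h0]
        rcases mul_eq_zero.mp hZ with h0' | h0' <;> rw [h0'] <;> ring
      · rw [h0]
        rcases mul_eq_zero.mp hZ with h0' | h0' <;> rw [h0'] <;> ring
    · rw [h0]
      rcases mul_eq_zero.mp hZ with h0' | h0' <;> rw [h0'] <;> ring
  · have hz1 : qp q a (j+m+s) ≠ 0 := by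
      intro h; apply hZ; rw [← hASP, h]; ring
    have hz2 : qp q (a*q^(j+m+s)) j ≠ 0 := by
      intro h; apply hZ; rw [← hASP, h]; ring
    -- split the (q^N)⁻¹ factorial
    have hNsplit : qp q ((q^(j+m+n))⁻¹) (j+m+s)
        = qp q ((q^(j+m+n))⁻¹) (j+m) * qp q ((q^n)⁻¹) s := by
      have h := qp_add q ((q^(j+m+n))⁻¹) (j+m) s
      rwa [inv_pow_mul hq0 (j+m) n] at h
    -- split the (a q^(N+1)) factorial
    have hAN : qp q (a*q^(j+m+n+1)) (j+m+s)
        = qp q (a*q^(j+m+n+1)) (j+m) * qp q (a*q^(2*(j+m))*q^(n+1)) s := by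
      have h := qp_add q (a*q^(j+m+n+1)) (j+m) s
      rwa [arg_eq2 q a (show (j+m+n+1) + (j+m) = 2*(j+m) + (n+1) from by omega)] at h
    -- convert the two inverse-power factorials
    have hK1 : qp q ((q^(j+m+s))⁻¹) j
        = (-1:ℂ)^j * qp q q (j+m+s) / (qp q q (m+s) * q^(j*(m+s)+j*(j+1)/2)) := by
      rw [eq_div_iff (mul_ne_zero hqms (pow_ne_zero _ hq0))]
      have h := qp_inv_pow hq0 j (m+s)
      rw [show j+(m+s) = j+m+s from by omega] at h
      have he := neg_one_sq' j
      linear_combination (-1:ℂ)^j * h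
        - qp q ((q^(j+m+s))⁻¹) j * qp q q (m+s) * q^(j*(m+s)+j*(j+1)/2) * he
    have hK2 : qp q ((q^(m+s))⁻¹) m
        = (-1:ℂ)^m * qp q q (m+s) / (qp q q s * q^(m*s+m*(m+1)/2)) := by
      rw [eq_div_iff (mul_ne_zero hqs (pow_ne_zero _ hq0))]
      have h := qp_inv_pow hq0 m s
      have he := neg_one_sq' m
      linear_combination (-1:ℂ)^m * h
        - qp q ((q^(m+s))⁻¹) m * qp q q s * q^(m*s+m*(m+1)/2) * he
    -- divide-out form of the a-chain
    have hA3 : qp q (a*q^(j+m+s)*q^j) m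
        = qp q a (2*(j+m)) * qp q (a*q^(2*(j+m))) s / (qp q a (j+m+s) * qp q (a*q^(j+m+s)) j) := by
      rw [eq_div_iff (mul_ne_zero hz1 hz2)]
      linear_combination hASP
    rw [hNsplit, hAN, hK1, hK2, hA3]
    generalize qp q ((q^(j+m+n))⁻¹) (j+m) = X1
    generalize qp q ((q^n)⁻¹) s = X2
    generalize qp q a (j+m+s) = X3 at hz1 ⊢
    generalize qp q (a*q^(j+m+s)) j = X4 at hz2 ⊢
    generalize qp q a (2*(j+m)) = X5
    generalize qp q (a*q^(2*(j+m))) s = X6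
    generalize qp q (b*q) j = X7
    generalize qp q (b*q^(j+1)) m = X8
    generalize qp q b (2*j) = X9 at hb1 ⊢
    generalize qp q (b*q^(1+2*j)) m = X10 at hb2 ⊢
    generalize qp q (a*q) (j+m) = X11 at ha1 ⊢
    generalize qp q (a*q^(j+m+n+1)) (j+m) = X12 at h4a ⊢
    generalize qp q (a*q^(2*(j+m))*q^(n+1)) s = X13 at h4b ⊢
    generalize qp q q (j+m+s) = X14 at hqk ⊢
    generalize qp q q (m+s) = X15 at hqms ⊢
    generalize qp q q m = X16 at hqm ⊢
    generalize qp q q s = X17 at hqs ⊢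
    generalize (1:ℂ) - a = A1 at h1 ⊢
    field_simp [h1, hz1, hz2, hb1, hb2, ha1, h4a, h4b, hqk, hqms, hqm, hqs]
    ring


lemma final_eq (q a b βj Ki : ℂ) (hq0 : q ≠ 0) (h1 : (1:ℂ) - a ≠ 0) (h2 : (1:ℂ) - b ≠ 0)
    (j m : ℕ) (hqm : qp q q m ≠ 0)
    (hb1 : qp q b (2*j) ≠ 0) (hb2 : qp q (b*q^(1+2*j)) m ≠ 0)
    (ha1 : qp q (a*q) (j+m) ≠ 0) (h4a : qp q (a*q^(j+m+1)) (j+m) ≠ 0)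
    (h5 : qp q (b*q^(j+m+1)) j ≠ 0) :
    (qp q ((q^(j+m))⁻¹) (j+m) * qp q a (2*(j+m)) * qp q (b*q) j * qp q (b*q^(j+1)) m
        * (-1:ℂ)^j * (-1:ℂ)^j * (-1:ℂ)^m * q^((j+m)*(j+m) + m) * βj * Ki
      / ((1-a) * qp q (a*q^(j+m+1)) (j+m) * qp q b (2*j) * qp q (b*q^(1+2*j)) m
        * qp q (a*q) (j+m) * qp q q m * q^(j*m + m*(m+1)/2)))
    * (1 - a*q^(2*(j+m)))
    = ((1 - b*q^(2*j)) * qp q ((q^(j+m))⁻¹) j / ((1-b) * qp q (b*q^(j+m+1)) j))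
        * q^((j+m)*j) * βj * Ki := by
  have rA : qp q a (2*(j+m)) * (1 - a*q^(2*(j+m)))
      = (1-a) * (qp q (a*q) (j+m) * qp q (a*q^(j+m+1)) (j+m)) := by
    rw [← qp_succ q a (2*(j+m)), qp_shift q a (2*(j+m)),
      show 2*(j+m) = (j+m)+(j+m) from by omega, qp_add q (a*q) (j+m) (j+m),
      show a*q*q^(j+m) = a*q^(j+m+1) from by rw [mul_assoc, ← pow_succ']]
  have hA3 : (1:ℂ) - a*q^(2*(j+m)) ≠ 0 := by
    intro h
    have := rA
    rw [h, mul_zero] at this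
    exact (mul_ne_zero h1 (mul_ne_zero ha1 h4a)) this.symm
  have rB1 : qp q (b*q) j * qp q (b*q^(j+1)) m = qp q (b*q) (j+m) := by
    have h := qp_add q (b*q) j m
    rw [show b*q*q^j = b*q^(j+1) from by rw [mul_assoc, ← pow_succ']] at h
    exact h.symm
  have rB2 : qp q b (2*j) * (1 - b*q^(2*j)) * qp q (b*q^(1+2*j)) m
      = (1-b) * (qp q (b*q) (j+m) * qp q (b*q^(j+m+1)) j) := by
    rw [← qp_succ q b (2*j), show b*q^(1+2*j) = b*q^(2*j+1) from by rw [Nat.add_comm],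
      ← qp_add q b (2*j+1) m, show 2*j+1+m = (j+m)+1+j from by omega,
      qp_add q b ((j+m)+1) j, qp_shift q b (j+m),
      show b*q^((j+m)+1) = b*q^(j+m+1) from rfl]
    ring
  by_cases hZb : qp q (b*q) j * qp q (b*q^(j+1)) m = 0
  · -- both sides vanish
    have hbq : qp q (b*q) (j+m) = 0 := by rw [← rB1]; exact hZb
    have h0 : qp q b (2*j) * (1 - b*q^(2*j)) * qp q (b*q^(1+2*j)) m = 0 := by
      rw [rB2, hbq]; ring
    have hb0 : (1:ℂ) - b*q^(2*j) = 0 := by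
      rcases mul_eq_zero.mp h0 with h' | h'
      · rcases mul_eq_zero.mp h' with h'' | h''
        · exact absurd h'' hb1
        · exact h''
      · exact absurd h' hb2
    rw [hb0]
    rcases mul_eq_zero.mp hZb with h' | h' <;> rw [h'] <;> ring
  · have hbq1 : qp q (b*q) j ≠ 0 := fun h => hZb (by rw [h]; ring)
    have rI1 : qp q ((q^(j+m))⁻¹) (j+m)
        = qp q ((q^(j+m))⁻¹) j * qp q ((q^m)⁻¹) m := by
      have h := qp_add q ((q^(j+m))⁻¹) j m
      rwa [inv_pow_mul hq0 j m] at h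
    have hQm : qp q ((q^m)⁻¹) m * (-1:ℂ)^m * q^(m*(m+1)/2) = qp q q m := by
      have h := qp_inv_pow hq0 m 0
      simpa [qp_zero] using h
    have rQm : qp q ((q^m)⁻¹) m = (-1:ℂ)^m * qp q q m / q^(m*(m+1)/2) := by
      rw [eq_div_iff (pow_ne_zero _ hq0)]
      have he := neg_one_sq' m
      linear_combination (-1:ℂ)^m * hQm
        - qp q ((q^m)⁻¹) m * q^(m*(m+1)/2) * he
    have dA : qp q a (2*(j+m))
        = (1-a) * (qp q (a*q) (j+m) * qp q (a*q^(j+m+1)) (j+m)) / (1 - a*q^(2*(j+m))) := by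
      rw [eq_div_iff hA3]; linear_combination rA
    have dB : (1:ℂ) - b*q^(2*j)
        = (1-b) * (qp q (b*q) (j+m) * qp q (b*q^(j+m+1)) j)
          / (qp q b (2*j) * qp q (b*q^(1+2*j)) m) := by
      rw [eq_div_iff (mul_ne_zero hb1 hb2)]; linear_combination rB2
    have dB1 : qp q (b*q^(j+1)) m = qp q (b*q) (j+m) / qp q (b*q) j := by
      rw [eq_div_iff hbq1]; linear_combination rB1
    have eexp : (j+m)*(j+m)+m = j*(j+m) + (j*m + m*(m+1)/2) + m*(m+1)/2 := by
      have h := two_tri m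
      have e2 : (j+m)*(j+m)+m = j*j+2*(j*m)+m*m+m := by ring
      have e3 : j*(j+m) = j*j+j*m := by ring
      have e4 : m*(m+1) = m*m+m := by ring
      omega
    rw [rI1, rQm, dA, dB, dB1, eexp,
      show ((1-b) * (qp q (b*q) (j+m) * qp q (b*q^(j+m+1)) j)
          / (qp q b (2*j) * qp q (b*q^(1+2*j)) m) * qp q ((q^(j+m))⁻¹) j
          / ((1-b) * qp q (b*q^(j+m+1)) j)) * q^((j+m)*j) * βj * Ki
        = (((1-b) * (qp q (b*q) (j+m) * qp q (b*q^(j+m+1)) j)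
          / (qp q b (2*j) * qp q (b*q^(1+2*j)) m) * qp q ((q^(j+m))⁻¹) j
          / ((1-b) * qp q (b*q^(j+m+1)) j)) * q^((j+m)*j) * βj * Ki)
          * ((-1:ℂ)^j * (-1:ℂ)^j) * ((-1:ℂ)^m * (-1:ℂ)^m) from by
        rw [neg_one_sq' j, neg_one_sq' m, mul_one, mul_one]]
    generalize qp q ((q^(j+m))⁻¹) j = Y1
    generalize qp q (a*q) (j+m) = Y3 at ha1 ⊢
    generalize qp q (a*q^(j+m+1)) (j+m) = Y4 at h4a ⊢
    generalize qp q (b*q) j = Y5 at hbq1 ⊢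
    generalize qp q (b*q) (j+m) = Y6
    generalize qp q (b*q^(j+m+1)) j = Y7 at h5 ⊢
    generalize qp q b (2*j) = Y8 at hb1 ⊢
    generalize qp q (b*q^(1+2*j)) m = Y9 at hb2 ⊢
    generalize qp q q m = Y10 at hqm ⊢
    generalize (1:ℂ) - a = A1 at h1 ⊢
    generalize (1:ℂ) - b = B1 at h2 ⊢
    generalize (1:ℂ) - a*q^(2*(j+m)) = A2 at hA3 ⊢
    have hpq : (q : ℂ)^(j*m + m*(m+1)/2 + m*(m+1)/2) ≠ 0 := pow_ne_zero _ hq0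
    have hprod : (Y10*Y10⁻¹)*(A1*A1⁻¹)*(Y3*Y3⁻¹)*(Y4*Y4⁻¹)*(A2*A2⁻¹)*(Y5*Y5⁻¹)
        *((q:ℂ)^(j*m + m*(m+1)/2 + m*(m+1)/2) * ((q:ℂ)^(j*m + m*(m+1)/2 + m*(m+1)/2))⁻¹)
        = (B1*B1⁻¹)*(Y7*Y7⁻¹) := by
      rw [mul_inv_cancel₀ hqm, mul_inv_cancel₀ h1, mul_inv_cancel₀ ha1, mul_inv_cancel₀ h4a,
        mul_inv_cancel₀ hA3, mul_inv_cancel₀ hbq1, mul_inv_cancel₀ hpq,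
        mul_inv_cancel₀ h2, mul_inv_cancel₀ h5]
      norm_num
    linear_combination (Y1 * Y6 * q^((j+m)*j) * βj * Ki * (-1:ℂ)^(2*j) * (-1:ℂ)^(2*m)
      * Y8⁻¹ * Y9⁻¹) * hprod


lemma Bzero {q : ℂ} (hq0 : q ≠ 0) {k j : ℕ} (h : k < j) : qp q ((q^k)⁻¹) j = 0 :=
  qp_eq_zero q _ h (inv_mul_cancel₀ (pow_ne_zero _ hq0))

lemma Czero {q : ℂ} (hq0 : q ≠ 0) {k j m : ℕ} (hjk : j ≤ k) (h : k - j < m) :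
    qp q (q^j*(q^k)⁻¹) m = 0 :=
  qp_eq_zero q _ h (by
    rw [mul_right_comm, ← pow_add, show j+(k-j) = k from by omega,
      mul_inv_cancel₀ (pow_ne_zero _ hq0)])

lemma ksum (q a b βj : ℂ) (K : ℕ → ℂ) (hq0 : q ≠ 0) (h1 : (1:ℂ) - a ≠ 0)
    (h2 : (1:ℂ) - b ≠ 0) (j m n : ℕ) (hqn : n ≠ 0 → q^n ≠ 1)
    (h3 : ∀ k, qp q q k ≠ 0)
    (h4 : ∀ k, qp q (a*q^(j+m+n+1)) k ≠ 0)
    (h5 : qp q (b*q^(j+m+n+1)) j ≠ 0)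
    (h6 : qp q b (2*j) ≠ 0)
    (h7 : qp q (b*q^(1+2*j)) m ≠ 0)
    (h8 : qp q (a*q) (j+m) ≠ 0) :
    ∑ k ∈ range (j+m+n+1),
      ((1 - a*q^(2*k)) * qp q ((q^(j+m+n))⁻¹) k * qp q a k
          / ((1-a) * qp q q k * qp q (a*q^(j+m+n+1)) k)) * q^((j+m+n)*k) *
      ((qp q ((q^k)⁻¹) j * qp q (a*q^k) j * qp q (b*q) j / qp q b (2*j)) *
        (-1:ℂ)^j * q^(j*(j+1)/2) * βj *
      ((qp q (q^j*(q^k)⁻¹) m * qp q (a*q^(j+k)) m * qp q (b*q^(j+1)) m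
          / (qp q q m * qp q (b*q^(1+2*j)) m * qp q (a*q) (j+m))) * q^m * K (j+m)))
    = if n = 0 then
        ((1 - b*q^(2*j)) * qp q ((q^(j+m+n))⁻¹) j / ((1-b) * qp q (b*q^(j+m+n+1)) j))
          * q^((j+m+n)*j) * βj * K (j+m)
      else 0 := by
  have h4b : ∀ s, qp q (a*q^(2*(j+m))*q^(n+1)) s ≠ 0 := by
    intro s
    have h := h4 ((j+m)+s)
    rw [qp_add, arg_eq2 q a (show (j+m+n+1)+(j+m) = 2*(j+m)+(n+1) from by omega)] at h
    exact (mul_ne_zero_iff.mp h).2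
  rw [show range (j+m+n+1) = range ((j+m)+(n+1)) from congrArg range (by omega), Finset.sum_range_add]
  have hzero : ∑ k ∈ range (j+m),
      ((1 - a*q^(2*k)) * qp q ((q^(j+m+n))⁻¹) k * qp q a k
          / ((1-a) * qp q q k * qp q (a*q^(j+m+n+1)) k)) * q^((j+m+n)*k) *
      ((qp q ((q^k)⁻¹) j * qp q (a*q^k) j * qp q (b*q) j / qp q b (2*j)) *
        (-1:ℂ)^j * q^(j*(j+1)/2) * βj *
      ((qp q (q^j*(q^k)⁻¹) m * qp q (a*q^(j+k)) m * qp q (b*q^(j+1)) m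
          / (qp q q m * qp q (b*q^(1+2*j)) m * qp q (a*q) (j+m))) * q^m * K (j+m)))
      = 0 := by
    refine Finset.sum_eq_zero fun k hk => ?_
    have hk' : k < j + m := mem_range.mp hk
    rcases le_or_gt j k with hj | hj
    · rw [Czero hq0 hj (by omega)]; ring
    · rw [Bzero hq0 hj]; ring
  rw [hzero, zero_add]
  have hterm : ∀ s ∈ range (n+1),
      ((1 - a*q^(2*((j+m)+s))) * qp q ((q^(j+m+n))⁻¹) ((j+m)+s) * qp q a ((j+m)+s)
          / ((1-a) * qp q q ((j+m)+s) * qp q (a*q^(j+m+n+1)) ((j+m)+s))) * q^((j+m+n)*((j+m)+s)) *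
      ((qp q ((q^((j+m)+s))⁻¹) j * qp q (a*q^((j+m)+s)) j * qp q (b*q) j / qp q b (2*j)) *
        (-1:ℂ)^j * q^(j*(j+1)/2) * βj *
      ((qp q (q^j*(q^((j+m)+s))⁻¹) m * qp q (a*q^(j+((j+m)+s))) m * qp q (b*q^(j+1)) m
          / (qp q q m * qp q (b*q^(1+2*j)) m * qp q (a*q) (j+m))) * q^m * K (j+m)))
      = (qp q ((q^(j+m+n))⁻¹) (j+m) * qp q a (2*(j+m)) * qp q (b*q) j * qp q (b*q^(j+1)) m
          * (-1:ℂ)^j * (-1:ℂ)^j * (-1:ℂ)^m * q^((j+m+n)*(j+m) + m) * βj * K (j+m)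
        / ((1-a) * qp q (a*q^(j+m+n+1)) (j+m) * qp q b (2*j) * qp q (b*q^(1+2*j)) m
          * qp q (a*q) (j+m) * qp q q m * q^(j*m + m*(m+1)/2)))
      * ((1 - (a*q^(2*(j+m))) * q^(2*s)) * qp q (a*q^(2*(j+m))) s * qp q ((q^n)⁻¹) s * q^(n*s)
          / (qp q q s * qp q (a*q^(2*(j+m)) * q^(n+1)) s)) := by
    intro s _
    exact term_eq q a b βj (K (j+m)) hq0 h1 j m n s (h3 _) (h3 _) (h3 _) (h3 _)
      h6 h7 h8 (h4 (j+m)) (h4b s)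
  rw [Finset.sum_congr rfl hterm, ← Finset.mul_sum,
    delta q (a*q^(2*(j+m))) n hq0 hqn h3 h4b]
  by_cases hn : n = 0
  · subst hn
    rw [if_pos rfl, if_pos rfl]
    simp only [Nat.add_zero]
    exact final_eq q a b βj (K (j+m)) hq0 h1 h2 j m (h3 m) h6 h7 h8 (h4 (j+m)) h5
  · rw [if_neg hn, if_neg hn, mul_zero]

/-- Wang–Ma's terminating expansion formula (the `y = q^N` case of (wang-ma1)).
`K m` denotes the value `K(q^m)`. -/
theorem stmt_6 (q a b : ℂ) (hq : ‖q‖ < 1) (hq0 : q ≠ 0)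
    (N : ℕ) (β : ℕ → ℂ) (K : ℕ → ℂ)
    (h1 : (1 : ℂ) - a ≠ 0) (h2 : (1 : ℂ) - b ≠ 0)
    (h3 : ∀ k : ℕ, qp q q k ≠ 0)
    (h4 : ∀ k : ℕ, qp q (a * q ^ (N + 1)) k ≠ 0)
    (h5 : ∀ j : ℕ, qp q (b * q ^ (N + 1)) j ≠ 0)
    (h6 : ∀ j : ℕ, qp q b (2 * j) ≠ 0)
    (h7 : ∀ j k : ℕ, qp q (b * q ^ (1 + 2 * j)) k ≠ 0)
    (h8 : ∀ k : ℕ, qp q (a * q) k ≠ 0) :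
    K N * ∑ j ∈ range (N + 1),
        ((1 - b * q ^ (2 * j)) * qp q ((q ^ N)⁻¹) j
            / ((1 - b) * qp q (b * q ^ (N + 1)) j)) * q ^ (N * j) * β j
    = ∑ k ∈ range (N + 1),
        ((1 - a * q ^ (2 * k)) * qp q ((q ^ N)⁻¹) k * qp q a k
            / ((1 - a) * qp q q k * qp q (a * q ^ (N + 1)) k)) * q ^ (N * k) *
        ∑ j ∈ range (k + 1),
          (qp q ((q ^ k)⁻¹) j * qp q (a * q ^ k) j * qp q (b * q) j
              / qp q b (2 * j)) *
          (-1 : ℂ) ^ j * q ^ (j * (j + 1) / 2) * β j *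
          ∑ m ∈ range (k - j + 1),
            (qp q (q ^ j * (q ^ k)⁻¹) m * qp q (a * q ^ (j + k)) m
                * qp q (b * q ^ (j + 1)) m
              / (qp q q m * qp q (b * q ^ (1 + 2 * j)) m * qp q (a * q) (j + m))) *
            q ^ m * K (j + m) := by
  have hqn : ∀ r : ℕ, r ≠ 0 → q ^ r ≠ 1 := by
    intro r hr h
    have h2' : ‖q ^ r‖ < 1 := by
      rw [norm_pow]
      exact pow_lt_one₀ (norm_nonneg q) hq hr
    rw [h] at h2'
    simp at h2'
  symm
  calc
    ∑ k ∈ range (N + 1),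
        ((1 - a * q ^ (2 * k)) * qp q ((q ^ N)⁻¹) k * qp q a k
            / ((1 - a) * qp q q k * qp q (a * q ^ (N + 1)) k)) * q ^ (N * k) *
        ∑ j ∈ range (k + 1),
          (qp q ((q ^ k)⁻¹) j * qp q (a * q ^ k) j * qp q (b * q) j
              / qp q b (2 * j)) *
          (-1 : ℂ) ^ j * q ^ (j * (j + 1) / 2) * β j *
          ∑ m ∈ range (k - j + 1),
            (qp q (q ^ j * (q ^ k)⁻¹) m * qp q (a * q ^ (j + k)) m
                * qp q (b * q ^ (j + 1)) m
              / (qp q q m * qp q (b * q ^ (1 + 2 * j)) m * qp q (a * q) (j + m))) *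
            q ^ m * K (j + m)
      = ∑ k ∈ range (N + 1), ∑ j ∈ range (N + 1), ∑ m ∈ range (N + 1),
          ((1 - a * q ^ (2 * k)) * qp q ((q ^ N)⁻¹) k * qp q a k
              / ((1 - a) * qp q q k * qp q (a * q ^ (N + 1)) k)) * q ^ (N * k) *
          ((qp q ((q ^ k)⁻¹) j * qp q (a * q ^ k) j * qp q (b * q) j
              / qp q b (2 * j)) *
            (-1 : ℂ) ^ j * q ^ (j * (j + 1) / 2) * β j *
          ((qp q (q ^ j * (q ^ k)⁻¹) m * qp q (a * q ^ (j + k)) m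
                * qp q (b * q ^ (j + 1)) m
              / (qp q q m * qp q (b * q ^ (1 + 2 * j)) m * qp q (a * q) (j + m))) *
            q ^ m * K (j + m))) := by
        refine Finset.sum_congr rfl fun k hk => ?_
        have hkN : k ≤ N := by have := mem_range.mp hk; omega
        rw [Finset.mul_sum]
        rw [Finset.sum_subset (Finset.range_subset_range.mpr (by omega : k + 1 ≤ N + 1))
          (fun j _ hj' => by
            have hkj : k < j := by
              rcases lt_or_ge k j with h | h
              · exact h
              · exact absurd (mem_range.mpr (by omega)) hj'
            rw [Bzero hq0 hkj]; ring)]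
        refine Finset.sum_congr rfl fun j hj => ?_
        rcases le_or_gt j k with hjk | hjk
        · rw [Finset.sum_subset (Finset.range_subset_range.mpr (by omega : k - j + 1 ≤ N + 1))
            (fun m _ hm' => by
              have hm : k - j < m := by
                rcases lt_or_ge (k - j) m with h | h
                · exact h
                · exact absurd (mem_range.mpr (by omega)) hm'
              rw [Czero hq0 hjk hm]; ring),
            Finset.mul_sum, Finset.mul_sum]
        · rw [Bzero hq0 hjk]
          trans (0 : ℂ)
          · ring
          · symm
            exact Finset.sum_eq_zero fun m _ => by ring
    _ = ∑ j ∈ range (N + 1), ∑ m ∈ range (N + 1), ∑ k ∈ range (N + 1),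
          ((1 - a * q ^ (2 * k)) * qp q ((q ^ N)⁻¹) k * qp q a k
              / ((1 - a) * qp q q k * qp q (a * q ^ (N + 1)) k)) * q ^ (N * k) *
          ((qp q ((q ^ k)⁻¹) j * qp q (a * q ^ k) j * qp q (b * q) j
              / qp q b (2 * j)) *
            (-1 : ℂ) ^ j * q ^ (j * (j + 1) / 2) * β j *
          ((qp q (q ^ j * (q ^ k)⁻¹) m * qp q (a * q ^ (j + k)) m
                * qp q (b * q ^ (j + 1)) m
              / (qp q q m * qp q (b * q ^ (1 + 2 * j)) m * qp q (a * q) (j + m))) *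
            q ^ m * K (j + m))) := by
        rw [Finset.sum_comm]
        exact Finset.sum_congr rfl fun j _ => Finset.sum_comm
    _ = ∑ j ∈ range (N + 1), ∑ m ∈ range (N + 1),
          (if j + m = N then
            ((1 - b * q ^ (2 * j)) * qp q ((q ^ N)⁻¹) j
              / ((1 - b) * qp q (b * q ^ (N + 1)) j)) * q ^ (N * j) * β j * K N
          else 0) := by
        refine Finset.sum_congr rfl fun j hj => Finset.sum_congr rfl fun m hm => ?_
        have hjN : j ≤ N := by have := mem_range.mp hj; omega
        have hmN : m ≤ N := by have := mem_range.mp hm; omega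
        rcases lt_trichotomy (j + m) N with hc | hc | hc
        · -- j+m < N
          rw [if_neg (by omega)]
          have hn0 : N - (j + m) ≠ 0 := by omega
          have h4' : ∀ k, qp q (a * q ^ (j + m + (N - (j + m)) + 1)) k ≠ 0 := by
            rw [show j + m + (N - (j + m)) = N from by omega]; exact h4
          have h5' : qp q (b * q ^ (j + m + (N - (j + m)) + 1)) j ≠ 0 := by
            rw [show j + m + (N - (j + m)) = N from by omega]; exact h5 j
          rw [show N = j + m + (N - (j + m)) from by omega]
          rw [ksum q a b (β j) K hq0 h1 h2 j m (N - (j + m)) (fun _ => hqn _ hn0)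
            h3 h4' h5' (h6 j) (h7 j m) (h8 (j + m)), if_neg hn0]
        · -- j+m = N
          rw [if_pos hc]
          have h4' : ∀ k, qp q (a * q ^ (j + m + 0 + 1)) k ≠ 0 := by
            rw [show j + m + 0 = N from by omega]; exact h4
          have h5' : qp q (b * q ^ (j + m + 0 + 1)) j ≠ 0 := by
            rw [show j + m + 0 = N from by omega]; exact h5 j
          rw [show N = j + m + 0 from by omega]
          rw [ksum q a b (β j) K hq0 h1 h2 j m 0 (fun h => absurd rfl h)
            h3 h4' h5' (h6 j) (h7 j m) (h8 (j + m)), if_pos rfl]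
          norm_num
        · -- N < j+m
          rw [if_neg (by omega)]
          refine Finset.sum_eq_zero fun k hk => ?_
          have hkN : k ≤ N := by have := mem_range.mp hk; omega
          rcases le_or_gt j k with hjk | hjk
          · rw [Czero hq0 hjk (by omega)]; ring
          · rw [Bzero hq0 hjk]; ring
    _ = ∑ j ∈ range (N + 1),
          ((1 - b * q ^ (2 * j)) * qp q ((q ^ N)⁻¹) j
            / ((1 - b) * qp q (b * q ^ (N + 1)) j)) * q ^ (N * j) * β j * K N := by
        refine Finset.sum_congr rfl fun j hj => ?_
        have hjN : j ≤ N := by have := mem_range.mp hj; omega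
        calc ∑ m ∈ range (N + 1),
              (if j + m = N then
                ((1 - b * q ^ (2 * j)) * qp q ((q ^ N)⁻¹) j
                  / ((1 - b) * qp q (b * q ^ (N + 1)) j)) * q ^ (N * j) * β j * K N
              else 0)
            = ∑ m ∈ range (N + 1),
              (if m = N - j then
                ((1 - b * q ^ (2 * j)) * qp q ((q ^ N)⁻¹) j
                  / ((1 - b) * qp q (b * q ^ (N + 1)) j)) * q ^ (N * j) * β j * K N
              else 0) := by
              refine Finset.sum_congr rfl fun m _ => ?_
              by_cases h : j + m = N
              · rw [if_pos h, if_pos (by omega)]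
              · rw [if_neg h, if_neg (by omega)]
          _ = _ := by
              rw [Finset.sum_ite_eq' (range (N + 1)) (N - j)]
              exact if_pos (mem_range.mpr (by omega))
    _ = K N * ∑ j ∈ range (N + 1),
          ((1 - b * q ^ (2 * j)) * qp q ((q ^ N)⁻¹) j
            / ((1 - b) * qp q (b * q ^ (N + 1)) j)) * q ^ (N * j) * β j := by
        rw [Finset.mul_sum]
        exact Finset.sum_congr rfl fun j _ => by ring
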